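/- For every multi-index β ∈ ℤ_+^d, there exist constants c_j^{|β|} ≥ 0 such that the function S_β(u, C) := e^{-(1/2)u^T C u} · ∂^β/∂u^β (e^{(1/2)u^T C u}) satisfies |S_β(u, C)| ≤ Σ_{j=0}^{|β|} c_j^{|β|} |u|^j |C|^{(j+|β|)/2} for all u ∈ ℝ^d and all symmetric d×d real matrices C, where |C| denotes a matrix norm and |β| = β_1 + ... + β_d. -/

import Mathlib

open scoped BigOperators Matrix

/-- Partial derivative in direction `i` of a function on `ℝ^d`. -/
noncomputable def partialDeriv {d : ℕ} (i : Fin d) (f : (Fin d → ℝ) → ℝ) :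
    (Fin d → ℝ) → ℝ :=
  fun u => fderiv ℝ f u (Pi.single i 1)

/-- Mixed partial derivative `∂^β/∂u^β` of multi-order `β`. -/
noncomputable def multiPartial {d : ℕ} (β : Fin d → ℕ) (f : (Fin d → ℝ) → ℝ) :
    (Fin d → ℝ) → ℝ :=
  (List.finRange d).foldr (fun i g => (partialDeriv i)^[β i] g) f

/-- Euclidean norm on `ℝ^d`. -/
noncomputable def euclNorm {d : ℕ} (u : Fin d → ℝ) : ℝ :=
  Real.sqrt (∑ i, (u i) ^ 2)

/-- Frobenius norm of a `d×d` real matrix. -/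
noncomputable def matNorm {d : ℕ} (C : Matrix (Fin d) (Fin d) ℝ) : ℝ :=
  Real.sqrt (∑ i, ∑ j, (C i j) ^ 2)

/-- `S_β(u,C) = e^{-(1/2)uᵀCu} ∂^β/∂u^β e^{(1/2)uᵀCu}`. -/
noncomputable def Sfun {d : ℕ} (β : Fin d → ℕ) (u : Fin d → ℝ)
    (C : Matrix (Fin d) (Fin d) ℝ) : ℝ :=
  Real.exp (-(1 / 2) * (u ⬝ᵥ C.mulVec u)) *
    multiPartial β (fun v => Real.exp ((1 / 2) * (v ⬝ᵥ C.mulVec v))) u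


open scoped BigOperators Matrix

namespace Stmt4Aux

variable {d : ℕ}

/-- A factor: either `(Cu)_i` (encoded `.inl i`) or `C i j` (encoded `.inr (i,j)`). -/
abbrev Fac (d : ℕ) := Sum (Fin d) (Fin d × Fin d)

noncomputable def fval (C : Matrix (Fin d) (Fin d) ℝ) (u : Fin d → ℝ) : Fac d → ℝ
  | .inl i => ∑ j, C i j * u j
  | .inr p => C p.1 p.2

noncomputable def ev (C : Matrix (Fin d) (Fin d) ℝ) (u : Fin d → ℝ)
    (M : List (Fac d)) : ℝ := (M.map (fval C u)).prod

def dDir (k : Fin d) : List (Fac d) → List (List (Fac d))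
  | [] => []
  | .inl i :: M => (.inr (i, k) :: M) :: (dDir k M).map (.inl i :: ·)
  | .inr p :: M => (dDir k M).map (.inr p :: ·)

def step (k : Fin d) : List (List (Fac d)) → List (List (Fac d))
  | [] => []
  | M :: L => (.inl k :: M) :: (dDir k M ++ step k L)

noncomputable def Q (C : Matrix (Fin d) (Fin d) ℝ) (u : Fin d → ℝ) : ℝ :=
  (1 / 2 : ℝ) * (u ⬝ᵥ C.mulVec u)

/-- sum-of-monomials times gaussian -/
noncomputable def F (C : Matrix (Fin d) (Fin d) ℝ) (L : List (List (Fac d))) :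
    (Fin d → ℝ) → ℝ :=
  fun u => ((L.map (ev C u)).sum) * Real.exp (Q C u)

variable {C : Matrix (Fin d) (Fin d) ℝ}

lemma diff_proj (j : Fin d) : Differentiable ℝ (fun u : Fin d → ℝ => u j) :=
  (ContinuousLinearMap.proj j : (Fin d → ℝ) →L[ℝ] ℝ).differentiable

lemma fderiv_proj (j : Fin d) (u v : Fin d → ℝ) :
    fderiv ℝ (fun u : Fin d → ℝ => u j) u v = v j := by
  have h : HasFDerivAt (fun u : Fin d → ℝ => u j)
      (ContinuousLinearMap.proj j : (Fin d → ℝ) →L[ℝ] ℝ) u :=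
    (ContinuousLinearMap.proj j : (Fin d → ℝ) →L[ℝ] ℝ).hasFDerivAt
  rw [h.fderiv]
  rfl

lemma diff_fval (f : Fac d) : Differentiable ℝ (fun u => fval C u f) := by
  cases f with
  | inl i =>
    exact Differentiable.fun_sum fun j _ => (differentiable_const _).mul (diff_proj j)
  | inr p => exact differentiable_const _

lemma single_sum (i k : Fin d) :
    ∑ j, C i j * (Pi.single k 1 : Fin d → ℝ) j = C i k := by
  simp [Pi.single_apply, mul_ite, Finset.sum_ite_eq']

noncomputable def dfac (k : Fin d) : Fac d → ℝ
  | .inl i => C i k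
  | .inr _ => 0

lemma fderiv_fval (f : Fac d) (k : Fin d) (u : Fin d → ℝ) :
    fderiv ℝ (fun u => fval C u f) u (Pi.single k 1) = dfac (C := C) k f := by
  cases f with
  | inl i =>
    have h : ∀ j : Fin d, j ∈ Finset.univ →
        DifferentiableAt ℝ (fun u : Fin d → ℝ => C i j * u j) u :=
      fun j _ => ((differentiable_const _).mul (diff_proj j)).differentiableAt
    show fderiv ℝ (fun u : Fin d → ℝ => ∑ j, C i j * u j) u (Pi.single k 1) = C i k
    rw [fderiv_fun_sum h]
    rw [ContinuousLinearMap.sum_apply]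
    have : ∀ j : Fin d,
        fderiv ℝ (fun u : Fin d → ℝ => C i j * u j) u (Pi.single k 1)
          = C i j * (Pi.single k 1 : Fin d → ℝ) j := by
      intro j
      rw [fderiv_const_mul (diff_proj j).differentiableAt]
      rw [ContinuousLinearMap.smul_apply, fderiv_proj]
      simp
    calc (∑ j, fderiv ℝ (fun u : Fin d → ℝ => C i j * u j) u (Pi.single k 1))
        = ∑ j, C i j * (Pi.single k 1 : Fin d → ℝ) j := by
          exact Finset.sum_congr rfl fun j _ => this j
      _ = C i k := single_sum i k
  | inr p => simp [fval, dfac]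

lemma ev_nil (u : Fin d → ℝ) : ev C u ([] : List (Fac d)) = 1 := rfl

lemma ev_cons (u : Fin d → ℝ) (f : Fac d) (M : List (Fac d)) :
    ev C u (f :: M) = fval C u f * ev C u M := by simp [ev]

lemma diff_ev (M : List (Fac d)) : Differentiable ℝ (fun u => ev C u M) := by
  induction M with
  | nil => simpa [ev] using differentiable_const (1:ℝ)
  | cons f M ih =>
    have : (fun u => ev C u (f :: M)) = fun u => fval C u f * ev C u M := by
      funext u; exact ev_cons u f M
    rw [this]
    exact (diff_fval f).mul ih

lemma sum_map_add {α : Type*} (L : List α) (f g : α → ℝ) :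
    (L.map (fun x => f x + g x)).sum = (L.map f).sum + (L.map g).sum := by
  induction L with
  | nil => simp
  | cons x L ih => simp [ih]; ring

lemma abs_sum_le {α : Type*} (L : List α) (f : α → ℝ) :
    |(L.map f).sum| ≤ (L.map (fun x => |f x|)).sum := by
  induction L with
  | nil => simp
  | cons x L ih =>
    simp only [List.map_cons, List.sum_cons]
    exact (abs_add_le _ _).trans (by linarith)

lemma fderiv_ev (M : List (Fac d)) (k : Fin d) (u : Fin d → ℝ) :
    fderiv ℝ (fun u => ev C u M) u (Pi.single k 1)
      = ((dDir k M).map (ev C u)).sum := by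
  induction M with
  | nil =>
    have : (fun u : Fin d → ℝ => ev C u ([] : List (Fac d))) = fun _ => (1:ℝ) := by
      funext u; rfl
    rw [this]
    simp [dDir]
  | cons f M ih =>
    have hre : (fun u => ev C u (f :: M)) = fun u => fval C u f * ev C u M := by
      funext u; exact ev_cons u f M
    rw [hre, fderiv_fun_mul ((diff_fval f).differentiableAt) ((diff_ev M).differentiableAt)]
    rw [ContinuousLinearMap.add_apply, ContinuousLinearMap.smul_apply,
      ContinuousLinearMap.smul_apply, fderiv_fval, ih]
    cases f with
    | inl i =>
      simp only [dDir, dfac, List.map_cons, List.sum_cons, List.map_map, smul_eq_mul]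
      have hcomp : (ev C u ∘ fun M' => Sum.inl i :: M')
          = fun M' => fval C u (.inl i) * ev C u M' := by
        funext M'; exact ev_cons u _ M'
      rw [hcomp, List.sum_map_mul_left, ev_cons]
      simp only [fval]
      ring
    | inr p =>
      simp only [dDir, dfac, List.map_map, smul_eq_mul]
      have hcomp : (ev C u ∘ fun M' => Sum.inr p :: M')
          = fun M' => fval C u (.inr p) * ev C u M' := by
        funext M'; exact ev_cons u _ M'
      rw [hcomp, List.sum_map_mul_left]
      ring

lemma diff_evsum (L : List (List (Fac d))) :
    Differentiable ℝ (fun u => (L.map (ev C u)).sum) := by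
  induction L with
  | nil => simpa using differentiable_const (0:ℝ)
  | cons M L ih =>
    have : (fun u => ((M :: L).map (ev C u)).sum)
        = fun u => ev C u M + (L.map (ev C u)).sum := by
      funext u; simp
    rw [this]
    exact (diff_ev M).add ih

lemma fderiv_evsum (L : List (List (Fac d))) (k : Fin d) (u : Fin d → ℝ) :
    fderiv ℝ (fun u => (L.map (ev C u)).sum) u (Pi.single k 1)
      = (L.map (fun M => ((dDir k M).map (ev C u)).sum)).sum := by
  induction L with
  | nil =>
    have : (fun u : Fin d → ℝ => (([]:List (List (Fac d))).map (ev C u)).sum)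
        = fun _ => (0:ℝ) := by funext u; simp
    rw [this]; simp
  | cons M L ih =>
    have hre : (fun u => ((M :: L).map (ev C u)).sum)
        = fun u => ev C u M + (L.map (ev C u)).sum := by
      funext u; simp
    rw [hre, fderiv_fun_add ((diff_ev M).differentiableAt) ((diff_evsum L).differentiableAt)]
    rw [ContinuousLinearMap.add_apply, fderiv_ev, ih]
    simp
lemma Q_eq (u : Fin d → ℝ) :
    Q C u = ∑ i, ∑ j, (1 / 2 * C i j) * (u i * u j) := by
  simp only [Q, dotProduct, Matrix.mulVec, Finset.mul_sum]
  apply Finset.sum_congr rfl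
  intro i _
  apply Finset.sum_congr rfl
  intro j _
  ring

lemma diff_Q : Differentiable ℝ (Q C) := by
  have hQ : Q C = fun u : Fin d → ℝ => ∑ i, ∑ j, (1 / 2 * C i j) * (u i * u j) := by
    funext u; exact Q_eq u
  rw [hQ]
  exact Differentiable.fun_sum fun i _ => Differentiable.fun_sum fun j _ =>
    (differentiable_const _).mul ((diff_proj i).mul (diff_proj j))

lemma fderiv_Q (hC : C.IsSymm) (k : Fin d) (u : Fin d → ℝ) :
    fderiv ℝ (Q C) u (Pi.single k 1) = fval C u (.inl k) := by
  have hQ : Q C = fun u : Fin d → ℝ => ∑ i, ∑ j, (1 / 2 * C i j) * (u i * u j) := by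
    funext u; exact Q_eq u
  rw [hQ]
  have hterm : ∀ i j : Fin d,
      DifferentiableAt ℝ (fun u : Fin d → ℝ => (1 / 2 * C i j) * (u i * u j)) u :=
    fun i j => ((differentiable_const _).mul
      ((diff_proj i).mul (diff_proj j))).differentiableAt
  have hin : ∀ i : Fin d,
      DifferentiableAt ℝ (fun u : Fin d → ℝ => ∑ j, (1 / 2 * C i j) * (u i * u j)) u :=
    fun i => DifferentiableAt.fun_sum fun j _ => hterm i j
  rw [fderiv_fun_sum fun i _ => hin i, ContinuousLinearMap.sum_apply]
  have h1 : ∀ i : Fin d,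
      fderiv ℝ (fun u : Fin d → ℝ => ∑ j, (1 / 2 * C i j) * (u i * u j)) u (Pi.single k 1)
        = ∑ j, (1 / 2 * C i j) *
            (u i * (Pi.single k 1 : Fin d → ℝ) j + (Pi.single k 1 : Fin d → ℝ) i * u j) := by
    intro i
    rw [fderiv_fun_sum fun j _ => hterm i j, ContinuousLinearMap.sum_apply]
    apply Finset.sum_congr rfl
    intro j _
    rw [fderiv_const_mul (show Differentiable ℝ (fun u : Fin d → ℝ => u i * u j) from
        (diff_proj i).mul (diff_proj j)).differentiableAt,
      ContinuousLinearMap.smul_apply,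
      fderiv_fun_mul (diff_proj i).differentiableAt (diff_proj j).differentiableAt,
      ContinuousLinearMap.add_apply, ContinuousLinearMap.smul_apply,
      ContinuousLinearMap.smul_apply, fderiv_proj, fderiv_proj]
    simp only [smul_eq_mul]
    ring
  rw [Finset.sum_congr rfl fun i _ => h1 i]
  have split : ∀ i : Fin d,
      (∑ j, (1 / 2 * C i j) *
          (u i * (Pi.single k 1 : Fin d → ℝ) j + (Pi.single k 1 : Fin d → ℝ) i * u j))
        = (1 / 2 * C i k) * u i
          + (Pi.single k 1 : Fin d → ℝ) i * ∑ j, (1 / 2 * C i j) * u j := by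
    intro i
    simp only [mul_add]
    rw [Finset.sum_add_distrib]
    congr 1
    · simp [Pi.single_apply, mul_ite, Finset.sum_ite_eq']
    · rw [Finset.mul_sum]
      apply Finset.sum_congr rfl
      intro j _
      ring
  rw [Finset.sum_congr rfl fun i _ => split i, Finset.sum_add_distrib]
  have h2 : (∑ i, (Pi.single k 1 : Fin d → ℝ) i * ∑ j, (1 / 2 * C i j) * u j)
      = ∑ j, (1 / 2 * C k j) * u j := by
    simp [Pi.single_apply, ite_mul, Finset.sum_ite_eq']
  rw [h2]
  have h3 : (∑ i, (1 / 2 * C i k) * u i) = ∑ i, (1 / 2 * C k i) * u i :=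
    Finset.sum_congr rfl fun i _ => by rw [hC.apply i k]
  rw [h3]
  show _ = ∑ j, C k j * u j
  rw [← Finset.sum_add_distrib]
  apply Finset.sum_congr rfl
  intro j _
  ring

lemma step_sum (k : Fin d) (L : List (List (Fac d))) (g : List (Fac d) → ℝ) :
    ((step k L).map g).sum
      = (L.map (fun M => g (.inl k :: M) + ((dDir k M).map g).sum)).sum := by
  induction L with
  | nil => simp [step]
  | cons M L ih =>
    simp [step, List.map_append, List.sum_append, ih]
    ring

lemma pd_step (hC : C.IsSymm) (k : Fin d) (L : List (List (Fac d))) :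
    partialDeriv k (F C L) = F C (step k L) := by
  funext u
  show fderiv ℝ (F C L) u (Pi.single k 1) = F C (step k L) u
  have hg := diff_evsum (C := C) L
  have hQd : DifferentiableAt ℝ (Q C) u := diff_Q.differentiableAt
  unfold F
  rw [fderiv_fun_mul hg.differentiableAt hQd.exp, ContinuousLinearMap.add_apply,
    ContinuousLinearMap.smul_apply, ContinuousLinearMap.smul_apply,
    fderiv_evsum, fderiv_exp hQd, ContinuousLinearMap.smul_apply, fderiv_Q hC]
  rw [step_sum, sum_map_add]
  have hfun : (fun M : List (Fac d) => ev C u (.inl k :: M))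
      = fun M => fval C u (.inl k) * ev C u M := by
    funext M; exact ev_cons u _ M
  rw [hfun, List.sum_map_mul_left]
  simp only [smul_eq_mul]
  ring
lemma pd_iter (hC : C.IsSymm) (k : Fin d) (n : ℕ) (L : List (List (Fac d))) :
    (partialDeriv k)^[n] (F C L) = F C ((step k)^[n] L) := by
  induction n generalizing L with
  | zero => rfl
  | succ n ih =>
    rw [Function.iterate_succ_apply, Function.iterate_succ_apply, pd_step hC, ih]

def mkL (d : ℕ) (β : Fin d → ℕ) : List (List (Fac d)) :=
  (List.finRange d).foldr (fun i L => (step i)^[β i] L) [[]]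

lemma rep_foldr (hC : C.IsSymm) (β : Fin d → ℕ) (l : List (Fin d))
    (L : List (List (Fac d))) :
    l.foldr (fun i g => (partialDeriv i)^[β i] g) (F C L)
      = F C (l.foldr (fun i L => (step i)^[β i] L) L) := by
  induction l with
  | nil => rfl
  | cons k l ih =>
    simp only [List.foldr_cons]
    rw [ih, pd_iter hC]

lemma multiPartial_rep (hC : C.IsSymm) (β : Fin d → ℕ) :
    multiPartial β (fun v => Real.exp ((1 / 2 : ℝ) * (v ⬝ᵥ C.mulVec v)))
      = F C (mkL d β) := by
  have h0 : (fun v : Fin d → ℝ => Real.exp ((1 / 2 : ℝ) * (v ⬝ᵥ C.mulVec v)))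
      = F C [[]] := by
    funext u
    simp [F, ev, Q]
  unfold multiPartial mkL
  rw [h0, rep_foldr hC]

lemma Sfun_eq (hC : C.IsSymm) (β : Fin d → ℕ) (u : Fin d → ℝ) :
    Sfun β u C = ((mkL d β).map (ev C u)).sum := by
  unfold Sfun
  rw [multiPartial_rep hC]
  have hF : F C (mkL d β) u = ((mkL d β).map (ev C u)).sum * Real.exp (Q C u) := rfl
  rw [hF]
  have hneg : (-(1 / 2) * (u ⬝ᵥ C.mulVec u) : ℝ) = -(Q C u) := by
    unfold Q; ring
  rw [hneg, mul_comm (((mkL d β).map (ev C u)).sum), ← mul_assoc, ← Real.exp_add,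
    neg_add_cancel, Real.exp_zero, one_mul]

/-! ### Counting -/

def aCnt (M : List (Fac d)) : ℕ := M.countP (·.isLeft)
def bCnt (M : List (Fac d)) : ℕ := M.countP (·.isRight)

lemma aCnt_cons_inl (i : Fin d) (M : List (Fac d)) :
    aCnt (.inl i :: M) = aCnt M + 1 := by simp [aCnt, List.countP_cons]
lemma aCnt_cons_inr (p : Fin d × Fin d) (M : List (Fac d)) :
    aCnt (.inr p :: M) = aCnt M := by simp [aCnt, List.countP_cons]
lemma bCnt_cons_inl (i : Fin d) (M : List (Fac d)) :
    bCnt (.inl i :: M) = bCnt M := by simp [bCnt, List.countP_cons]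
lemma bCnt_cons_inr (p : Fin d × Fin d) (M : List (Fac d)) :
    bCnt (.inr p :: M) = bCnt M + 1 := by simp [bCnt, List.countP_cons]

lemma wt_dDir (k : Fin d) : ∀ (M : List (Fac d)) (M' : List (Fac d)), M' ∈ dDir k M →
    aCnt M' + 2 * bCnt M' = aCnt M + 2 * bCnt M + 1 := by
  intro M
  induction M with
  | nil => intro M' h; simp [dDir] at h
  | cons f M ih =>
    cases f with
    | inl i =>
      intro M' h
      simp only [dDir, List.mem_cons, List.mem_map] at h
      rcases h with rfl | ⟨M'', hM'', rfl⟩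
      · rw [aCnt_cons_inr, bCnt_cons_inr, aCnt_cons_inl, bCnt_cons_inl]; omega
      · have := ih M'' hM''
        rw [aCnt_cons_inl, bCnt_cons_inl, aCnt_cons_inl, bCnt_cons_inl]; omega
    | inr p =>
      intro M' h
      simp only [dDir, List.mem_map] at h
      rcases h with ⟨M'', hM'', rfl⟩
      have := ih M'' hM''
      rw [aCnt_cons_inr, bCnt_cons_inr, aCnt_cons_inr, bCnt_cons_inr]; omega

lemma wt_step (k : Fin d) (L : List (List (Fac d))) (n : ℕ)
    (h : ∀ M ∈ L, aCnt M + 2 * bCnt M = n) :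
    ∀ M' ∈ step k L, aCnt M' + 2 * bCnt M' = n + 1 := by
  induction L with
  | nil => intro M' h'; simp [step] at h'
  | cons M L ih =>
    intro M' h'
    simp only [step, List.mem_cons, List.mem_append] at h'
    have hM := h M (by simp)
    rcases h' with rfl | h' | h'
    · rw [aCnt_cons_inl, bCnt_cons_inl]; omega
    · rw [wt_dDir k M M' h', hM]
    · exact ih (fun M2 hM2 => h M2 (by simp [hM2])) M' h'

lemma wt_step_iter (k : Fin d) (m : ℕ) : ∀ (L : List (List (Fac d))) (n : ℕ),
    (∀ M ∈ L, aCnt M + 2 * bCnt M = n) →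
    ∀ M' ∈ (step k)^[m] L, aCnt M' + 2 * bCnt M' = n + m := by
  induction m with
  | zero => intro L n h M' hM'; simpa using h M' hM'
  | succ m ih =>
    intro L n h M' hM'
    rw [Function.iterate_succ_apply] at hM'
    have := ih (step k L) (n + 1) (wt_step k L n h) M' hM'
    omega

lemma wt_foldr (β : Fin d → ℕ) : ∀ (l : List (Fin d)) (L : List (List (Fac d))) (n : ℕ),
    (∀ M ∈ L, aCnt M + 2 * bCnt M = n) →
    ∀ M ∈ l.foldr (fun i L => (step i)^[β i] L) L,
      aCnt M + 2 * bCnt M = n + (l.map β).sum := by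
  intro l
  induction l with
  | nil => intro L n h M hM; simpa using h M hM
  | cons k l ih =>
    intro L n h M hM
    simp only [List.foldr_cons] at hM
    have := wt_step_iter k (β k) _ _ (ih L n h) M hM
    simp only [List.map_cons, List.sum_cons]
    omega

lemma wt_mkL (β : Fin d → ℕ) :
    ∀ M ∈ mkL d β, aCnt M + 2 * bCnt M = ∑ i, β i := by
  intro M hM
  have h0 : ∀ M ∈ ([[]] : List (List (Fac d))), aCnt M + 2 * bCnt M = 0 := by
    intro M hM
    simp only [List.mem_singleton] at hM
    subst hM
    simp [aCnt, bCnt]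
  have := wt_foldr β (List.finRange d) [[]] 0 h0 M hM
  rw [this, Fin.sum_univ_def]
  omega
/-! ### Norm bounds -/

lemma euclNorm_nonneg (u : Fin d → ℝ) : 0 ≤ euclNorm u := Real.sqrt_nonneg _
lemma matNorm_nonneg : 0 ≤ matNorm C := Real.sqrt_nonneg _

lemma abs_entry_le (i j : Fin d) : |C i j| ≤ matNorm C := by
  rw [← Real.sqrt_sq_eq_abs]
  apply Real.sqrt_le_sqrt
  calc C i j ^ 2 ≤ ∑ j', C i j' ^ 2 :=
        Finset.single_le_sum (f := fun j' => C i j' ^ 2)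
          (fun _ _ => sq_nonneg _) (Finset.mem_univ j)
    _ ≤ ∑ i', ∑ j', C i' j' ^ 2 :=
        Finset.single_le_sum (f := fun i' => ∑ j', C i' j' ^ 2)
          (fun _ _ => Finset.sum_nonneg fun _ _ => sq_nonneg _) (Finset.mem_univ i)

lemma abs_row_le (i : Fin d) (u : Fin d → ℝ) :
    |∑ j, C i j * u j| ≤ matNorm C * euclNorm u := by
  rw [← Real.sqrt_sq_eq_abs]
  unfold matNorm euclNorm
  rw [← Real.sqrt_mul (x := ∑ i, ∑ j, C i j ^ 2) (Finset.sum_nonneg fun _ _ => Finset.sum_nonneg fun _ _ => sq_nonneg _)]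
  apply Real.sqrt_le_sqrt
  calc (∑ j, C i j * u j) ^ 2 ≤ (∑ j, C i j ^ 2) * (∑ j, u j ^ 2) :=
        Finset.sum_mul_sq_le_sq_mul_sq _ _ _
    _ ≤ (∑ i', ∑ j, C i' j ^ 2) * (∑ j, u j ^ 2) := by
        apply mul_le_mul_of_nonneg_right _ (Finset.sum_nonneg fun _ _ => sq_nonneg _)
        exact Finset.single_le_sum (f := fun i' => ∑ j, C i' j ^ 2)
          (fun _ _ => Finset.sum_nonneg fun _ _ => sq_nonneg _) (Finset.mem_univ i)

lemma abs_ev_le (u : Fin d → ℝ) (M : List (Fac d)) :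
    |ev C u M| ≤ euclNorm u ^ aCnt M * matNorm C ^ (aCnt M + bCnt M) := by
  induction M with
  | nil => simp [ev, aCnt, bCnt]
  | cons f M ih =>
    rw [ev_cons, abs_mul]
    have hE := euclNorm_nonneg u
    have hN := matNorm_nonneg (C := C)
    have hnn : (0:ℝ) ≤ euclNorm u ^ aCnt M * matNorm C ^ (aCnt M + bCnt M) :=
      mul_nonneg (pow_nonneg hE _) (pow_nonneg hN _)
    cases f with
    | inl i =>
      have h1 : |fval C u (.inl i)| ≤ matNorm C * euclNorm u := abs_row_le i u
      have h2 := mul_le_mul h1 ih (abs_nonneg _) (mul_nonneg hN hE)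
      refine h2.trans (le_of_eq ?_)
      rw [aCnt_cons_inl, bCnt_cons_inl]
      ring
    | inr p =>
      have h1 : |fval C u (.inr p)| ≤ matNorm C := abs_entry_le p.1 p.2
      have h2 := mul_le_mul h1 ih (abs_nonneg _) hN
      refine h2.trans (le_of_eq ?_)
      rw [aCnt_cons_inr, bCnt_cons_inr]
      ring

/-! ### Grouping -/

lemma group {α : Type*} (L : List α) (g : α → ℕ) (f : ℕ → ℝ) (n : ℕ)
    (h : ∀ M ∈ L, g M ≤ n) :
    (L.map fun M => f (g M)).sum
      = ∑ j ∈ Finset.range (n + 1), ((L.countP fun M => g M == j : ℕ) : ℝ) * f j := by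
  induction L with
  | nil => simp
  | cons M L ih =>
    have hM : g M ∈ Finset.range (n + 1) :=
      Finset.mem_range.2 (Nat.lt_succ_of_le (h M List.mem_cons_self))
    simp only [List.map_cons, List.sum_cons, List.countP_cons]
    rw [ih fun M' hM' => h M' (List.mem_cons_of_mem _ hM')]
    have hsplit : ∀ j : ℕ,
        (((L.countP fun M' => g M' == j) + if (g M == j) = true then 1 else 0 : ℕ) : ℝ) * f j
          = ((L.countP fun M' => g M' == j : ℕ) : ℝ) * f j
            + (if g M = j then (1:ℝ) else 0) * f j := by
      intro j
      by_cases hj : g M = j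
      · simp [hj]; ring
      · simp [hj]
    rw [Finset.sum_congr rfl fun j _ => hsplit j, Finset.sum_add_distrib]
    have hone : (∑ j ∈ Finset.range (n + 1), (if g M = j then (1:ℝ) else 0) * f j)
        = f (g M) := by
      simp only [ite_mul, one_mul, zero_mul]
      rw [Finset.sum_ite_eq]
      simp [hM]
    rw [hone]
    ring
end Stmt4Aux

open Stmt4Aux in
theorem stmt4 {d : ℕ} (β : Fin d → ℕ) :
    ∃ c : ℕ → ℝ, (∀ j, 0 ≤ c j) ∧
      ∀ (u : Fin d → ℝ) (C : Matrix (Fin d) (Fin d) ℝ), C.IsSymm →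
        |Sfun β u C| ≤ ∑ j ∈ Finset.range ((∑ i, β i) + 1),
          c j * euclNorm u ^ j *
            matNorm C ^ (((j : ℝ) + (∑ i, β i : ℕ)) / 2) := by
  classical
  set n := ∑ i, β i with hn
  refine ⟨fun j => (((mkL d β).countP fun M => aCnt M == j : ℕ) : ℝ),
    fun j => Nat.cast_nonneg _, ?_⟩
  intro u C hC
  rw [Sfun_eq hC β u]
  set f : ℕ → ℝ := fun j => euclNorm u ^ j * matNorm C ^ (((j : ℝ) + n) / 2) with hf
  have h1 : |((mkL d β).map (ev C u)).sum| ≤ ((mkL d β).map fun M => |ev C u M|).sum :=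
    abs_sum_le _ _
  have h2 : ((mkL d β).map fun M => |ev C u M|).sum
      ≤ ((mkL d β).map fun M => f (aCnt M)).sum := by
    apply List.sum_le_sum
    intro M hM
    have hw : aCnt M + 2 * bCnt M = n := wt_mkL β M hM
    refine (abs_ev_le u M).trans (le_of_eq ?_)
    have hexp : (((aCnt M : ℝ) + n) / 2) = ((aCnt M + bCnt M : ℕ) : ℝ) := by
      push_cast
      have : (aCnt M : ℝ) + 2 * bCnt M = n := by exact_mod_cast hw
      linarith
    rw [hf]
    simp only []
    rw [hexp, Real.rpow_natCast]
  have h3 : ((mkL d β).map fun M => f (aCnt M)).sum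
      = ∑ j ∈ Finset.range (n + 1),
          (((mkL d β).countP fun M => aCnt M == j : ℕ) : ℝ) * f j := by
    apply group
    intro M hM
    have := wt_mkL β M hM
    omega
  calc |((mkL d β).map (ev C u)).sum|
      ≤ ((mkL d β).map fun M => f (aCnt M)).sum := h1.trans h2
    _ = ∑ j ∈ Finset.range (n + 1),
          (((mkL d β).countP fun M => aCnt M == j : ℕ) : ℝ) * f j := h3
    _ = ∑ j ∈ Finset.range (n + 1),
          (((mkL d β).countP fun M => aCnt M == j : ℕ) : ℝ) * euclNorm u ^ j *
            matNorm C ^ (((j : ℝ) + n) / 2) := by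
        apply Finset.sum_congr rfl
        intro j _
        rw [hf, mul_assoc]
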